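/- arXiv:1502.06967 — 8 statements merged into one kernel-verified Lean document; each statement's English description precedes it below -/
import Mathlib

section
/- Suppose |u₁⟩, |u₂⟩ are unit vectors with |⟨u₁|u₂⟩| ≤ ω, and |v₁⟩, |v₂⟩ are unit vectors with |⟨u_j|v_j⟩| ≥ 1 - δ for j = 1, 2. Then |⟨v₁|v₂⟩| ≤ ω + √(10δ). -/
open scoped InnerProductSpace

lemma residual_norm_le {E : Type*} [NormedAddCommGroup E]
    [InnerProductSpace ℂ E] (u v : E) (δ : ℝ)
    (hu : ‖u‖ = 1) (hv : ‖v‖ = 1) (hδ0 : 0 ≤ δ)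
    (h : 1 - δ ≤ ‖⟪u, v⟫_ℂ‖) :
    ‖v - ⟪u, v⟫_ℂ • u‖ ≤ Real.sqrt (2 * δ) := by
  have hsq : ‖v - ⟪u, v⟫_ℂ • u‖ ^ 2 = 1 - ‖⟪u, v⟫_ℂ‖ ^ 2 := by
    have hexp := @norm_sub_sq ℂ E _ _ _ v (⟪u, v⟫_ℂ • u)
    have h1 : ⟪v, ⟪u, v⟫_ℂ • u⟫_ℂ = ⟪u, v⟫_ℂ * ⟪v, u⟫_ℂ := by
      rw [inner_smul_right]
    have h2 : ⟪v, u⟫_ℂ = starRingEnd ℂ ⟪u, v⟫_ℂ := by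
      rw [← inner_conj_symm]
    have h3 : RCLike.re (⟪u, v⟫_ℂ * starRingEnd ℂ ⟪u, v⟫_ℂ) = ‖⟪u, v⟫_ℂ‖ ^ 2 := by
      rw [Complex.mul_conj]
      simp [Complex.sq_norm]
    have h4 : ‖⟪u, v⟫_ℂ • u‖ = ‖⟪u, v⟫_ℂ‖ := by
      rw [norm_smul, hu, mul_one]
    rw [hexp, h1, h2, h3, h4, hv]
    ring
  have habs1 : ‖⟪u, v⟫_ℂ‖ ^ 2 ≥ 1 - 2 * δ := by
    nlinarith [h, hδ0]
  have : ‖v - ⟪u, v⟫_ℂ • u‖ ^ 2 ≤ 2 * δ := by rw [hsq]; linarith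
  calc ‖v - ⟪u, v⟫_ℂ • u‖ = Real.sqrt (‖v - ⟪u, v⟫_ℂ • u‖ ^ 2) :=
        (Real.sqrt_sq (norm_nonneg _)).symm
    _ ≤ Real.sqrt (2 * δ) := Real.sqrt_le_sqrt this

/-- If `|⟨u₁|u₂⟩| ≤ ω` and `|⟨u_j|v_j⟩| ≥ 1 - δ` for unit vectors (`j = 1, 2`),
then `|⟨v₁|v₂⟩| ≤ ω + √(10δ)`. -/
theorem overlap_pair_transfer {E : Type*} [NormedAddCommGroup E]
    [InnerProductSpace ℂ E] [FiniteDimensional ℂ E]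
    (u₁ u₂ v₁ v₂ : E) (ω δ : ℝ)
    (hu₁ : ‖u₁‖ = 1) (hu₂ : ‖u₂‖ = 1) (hv₁ : ‖v₁‖ = 1) (hv₂ : ‖v₂‖ = 1)
    (hω : 0 ≤ ω) (hδ0 : 0 ≤ δ) (hδ1 : δ ≤ 1)
    (h12 : ‖⟪u₁, u₂⟫_ℂ‖ ≤ ω)
    (h1 : 1 - δ ≤ ‖⟪u₁, v₁⟫_ℂ‖)
    (h2 : 1 - δ ≤ ‖⟪u₂, v₂⟫_ℂ‖) :
    ‖⟪v₁, v₂⟫_ℂ‖ ≤ ω + Real.sqrt (10 * δ) := by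
  set c₁ : ℂ := ⟪u₁, v₁⟫_ℂ with hc₁
  set c₂ : ℂ := ⟪u₂, v₂⟫_ℂ with hc₂
  set w₁ : E := v₁ - c₁ • u₁ with hw₁
  set w₂ : E := v₂ - c₂ • u₂ with hw₂
  have hW₁ : ‖w₁‖ ≤ Real.sqrt (2 * δ) := residual_norm_le u₁ v₁ δ hu₁ hv₁ hδ0 h1
  have hW₂ : ‖w₂‖ ≤ Real.sqrt (2 * δ) := residual_norm_le u₂ v₂ δ hu₂ hv₂ hδ0 h2
  have hC₁ : ‖c₁‖ ≤ 1 := by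
    have := norm_inner_le_norm (𝕜 := ℂ) u₁ v₁
    simpa [hu₁, hv₁] using this
  have hC₂ : ‖c₂‖ ≤ 1 := by
    have := norm_inner_le_norm (𝕜 := ℂ) u₂ v₂
    simpa [hu₂, hv₂] using this
  -- inner expansions
  have hv₁eq : v₁ = c₁ • u₁ + w₁ := by rw [hw₁]; abel
  have hv₂eq : v₂ = c₂ • u₂ + w₂ := by rw [hw₂]; abel
  have hexp1 : ⟪v₁, v₂⟫_ℂ = starRingEnd ℂ c₁ * ⟪u₁, v₂⟫_ℂ + ⟪w₁, v₂⟫_ℂ := by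
    conv_lhs => rw [hv₁eq]
    rw [inner_add_left, inner_smul_left]
  have hexp2 : ⟪u₁, v₂⟫_ℂ = c₂ * ⟪u₁, u₂⟫_ℂ + ⟪u₁, w₂⟫_ℂ := by
    conv_lhs => rw [hv₂eq]
    rw [inner_add_right, inner_smul_right]
  have hb2 : ‖⟪u₁, v₂⟫_ℂ‖ ≤ ω + Real.sqrt (2 * δ) := by
    rw [hexp2]
    calc ‖c₂ * ⟪u₁, u₂⟫_ℂ + ⟪u₁, w₂⟫_ℂ‖
        ≤ ‖c₂ * ⟪u₁, u₂⟫_ℂ‖ + ‖⟪u₁, w₂⟫_ℂ‖ :=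
          norm_add_le _ _
      _ = ‖c₂‖ * ‖⟪u₁, u₂⟫_ℂ‖ + ‖⟪u₁, w₂⟫_ℂ‖ := by
          rw [norm_mul]
      _ ≤ 1 * ω + Real.sqrt (2 * δ) := by
          have hcs : ‖⟪u₁, w₂⟫_ℂ‖ ≤ ‖w₂‖ := by
            have := norm_inner_le_norm (𝕜 := ℂ) u₁ w₂
            simpa [hu₁] using this
          have := norm_nonneg ⟪u₁, u₂⟫_ℂ
          gcongr
          exact le_trans hcs hW₂
      _ = ω + Real.sqrt (2 * δ) := by ring
  have hb1 : ‖⟪v₁, v₂⟫_ℂ‖ ≤ ω + 2 * Real.sqrt (2 * δ) := by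
    rw [hexp1]
    have hcs : ‖⟪w₁, v₂⟫_ℂ‖ ≤ ‖w₁‖ := by
      have := norm_inner_le_norm (𝕜 := ℂ) w₁ v₂
      simpa [hv₂] using this
    calc ‖starRingEnd ℂ c₁ * ⟪u₁, v₂⟫_ℂ + ⟪w₁, v₂⟫_ℂ‖
        ≤ ‖starRingEnd ℂ c₁‖ * ‖⟪u₁, v₂⟫_ℂ‖
            + ‖⟪w₁, v₂⟫_ℂ‖ := by
          rw [← norm_mul]; exact norm_add_le _ _
      _ ≤ 1 * (ω + Real.sqrt (2 * δ)) + Real.sqrt (2 * δ) := by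
          have : ‖starRingEnd ℂ c₁‖ ≤ 1 := by
            rwa [Complex.norm_conj]
          have h0 : (0:ℝ) ≤ ω + Real.sqrt (2 * δ) :=
            add_nonneg hω (Real.sqrt_nonneg _)
          gcongr
          exact le_trans hcs hW₁
      _ = ω + 2 * Real.sqrt (2 * δ) := by ring
  have hfinal : 2 * Real.sqrt (2 * δ) ≤ Real.sqrt (10 * δ) := by
    rw [show (2:ℝ) * Real.sqrt (2 * δ) = Real.sqrt 4 * Real.sqrt (2 * δ) by
      rw [show (4:ℝ) = 2^2 by norm_num, Real.sqrt_sq (by norm_num)],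
      ← Real.sqrt_mul (by norm_num)]
    apply Real.sqrt_le_sqrt
    linarith
  linarith
end

section
/- Given unit vectors |u⟩, |v⟩ with ⟨u|H|u⟩ ≤ ε₀ + Δε and ⟨v|H|v⟩ ≤ ε₀ + Δε and |⟨u|v⟩| ≤ β < 1, there exist orthonormal vectors |u'⟩, |v'⟩ in span{|u⟩,|v⟩} such that ⟨u'|H|u'⟩ ≤ ε₀ + Δε(1+β)/(1-β) and ⟨v'|H|v'⟩ ≤ ε₀ + Δε(1+β)/(1-β). -/
open scoped InnerProductSpace

set_option maxHeartbeats 2000000 in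
/-- Orthogonalising lemma: two low-energy unit vectors with overlap at most `β < 1` can
be replaced by orthonormal vectors in their span whose energies are at most
`ε₀ + Δε(1+β)/(1-β)`. -/
theorem orthogonalising_lemma {E : Type*} [NormedAddCommGroup E]
    [InnerProductSpace ℂ E] [FiniteDimensional ℂ E]
    (A : E →L[ℂ] E) (ε₀ ε Δ β : ℝ) (u v : E)
    (hA : IsSelfAdjoint A)
    (hε₀ : ∀ w : E, ε₀ * ‖w‖ ^ 2 ≤ (⟪w, A w⟫_ℂ).re)
    (hΔ : 0 ≤ Δ) (hε : 0 ≤ ε) (hβ0 : 0 ≤ β) (hβ1 : β < 1)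
    (hu : ‖u‖ = 1) (hv : ‖v‖ = 1)
    (hind : LinearIndependent ℂ ![u, v])
    (hEu : (⟪u, A u⟫_ℂ).re ≤ ε₀ + Δ * ε)
    (hEv : (⟪v, A v⟫_ℂ).re ≤ ε₀ + Δ * ε)
    (hover : ‖⟪u, v⟫_ℂ‖ ≤ β) :
    ∃ u' v' : E, ‖u'‖ = 1 ∧ ‖v'‖ = 1 ∧ ⟪u', v'⟫_ℂ = 0 ∧
      u' ∈ Submodule.span ℂ {u, v} ∧ v' ∈ Submodule.span ℂ {u, v} ∧
      (⟪u', A u'⟫_ℂ).re ≤ ε₀ + Δ * ε * (1 + β) / (1 - β) ∧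
      (⟪v', A v'⟫_ℂ).re ≤ ε₀ + Δ * ε * (1 + β) / (1 - β) := by
  have normsq : ∀ x : E, (⟪x, x⟫_ℂ).re = ‖x‖ ^ 2 := by
    intro x
    rw [inner_self_eq_norm_sq_to_K]
    simp [← Complex.ofReal_pow]
  have hsym : ∀ x y : E, ⟪x, A y⟫_ℂ = (starRingEnd ℂ) ⟪y, A x⟫_ℂ := by
    intro x y
    have h := ContinuousLinearMap.adjoint_inner_left (𝕜 := ℂ) A y x
    rw [hA.adjoint_eq] at h
    rw [← h, inner_conj_symm]
  have cexp : ∀ (x y : E) (z : ℂ),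
      ⟪x - z • y, A (x - z • y)⟫_ℂ
        = ⟪x, A x⟫_ℂ - z * ⟪x, A y⟫_ℂ - (starRingEnd ℂ) z * (starRingEnd ℂ) ⟪x, A y⟫_ℂ
          + z * (starRingEnd ℂ) z * ⟪y, A y⟫_ℂ := by
    intro x y z
    rw [map_sub, map_smul]
    simp only [inner_sub_left, inner_sub_right, inner_smul_left, inner_smul_right,
      hsym x y, Complex.conj_conj]
    ring
  have cexp2 : ∀ (x y : E) (z : ℂ),
      ⟪x - z • y, x - z • y⟫_ℂ
        = ⟪x, x⟫_ℂ - z * ⟪x, y⟫_ℂ - (starRingEnd ℂ) z * (starRingEnd ℂ) ⟪x, y⟫_ℂ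
          + z * (starRingEnd ℂ) z * ⟪y, y⟫_ℂ := by
    intro x y z
    have hxy : ⟪y, x⟫_ℂ = (starRingEnd ℂ) ⟪x, y⟫_ℂ := by rw [inner_conj_symm]
    simp only [inner_sub_left, inner_sub_right, inner_smul_left, inner_smul_right, hxy, Complex.conj_conj]
    ring
  have Fexp : ∀ (x y : E) (z : ℂ),
      (⟪x - z • y, A (x - z • y)⟫_ℂ).re - ε₀ * ‖x - z • y‖ ^ 2
        = ((⟪x, A x⟫_ℂ).re - ε₀ * ‖x‖ ^ 2)
          + Complex.normSq z * ((⟪y, A y⟫_ℂ).re - ε₀ * ‖y‖ ^ 2)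
          - 2 * (z * (⟪x, A y⟫_ℂ - (ε₀ : ℂ) * ⟪x, y⟫_ℂ)).re := by
    intro x y z
    have hre : (⟪A y, x⟫_ℂ).re = (⟪x, A y⟫_ℂ).re := by
      rw [← inner_conj_symm (A y) x]; simp only [Complex.conj_re]
    have him : (⟪A y, x⟫_ℂ).im = -(⟪x, A y⟫_ℂ).im := by
      rw [← inner_conj_symm (A y) x]; simp only [Complex.conj_im]
    have hre2 : (⟪y, x⟫_ℂ).re = (⟪x, y⟫_ℂ).re := by
      rw [← inner_conj_symm y x]; simp only [Complex.conj_re]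
    have him2 : (⟪y, x⟫_ℂ).im = -(⟪x, y⟫_ℂ).im := by
      rw [← inner_conj_symm y x]; simp only [Complex.conj_im]
    rw [← normsq, ← normsq, ← normsq, cexp x y z, cexp2 x y z]
    simp [Complex.normSq_apply, Complex.sub_re, Complex.add_re, Complex.mul_re,
      Complex.mul_im, Complex.conj_re, Complex.conj_im, Complex.ofReal_re,
      Complex.ofReal_im, Complex.sub_im, hre, him, hre2, him2]
    ring
  set a : ℂ := ⟪u, v⟫_ℂ with ha
  set c : ℝ := ‖a‖ with hc
  have hc0 : 0 ≤ c := norm_nonneg a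
  have hcβ : c ≤ β := hover
  set t : ℂ := ⟪v, A u⟫_ℂ - (ε₀ : ℂ) * ⟪v, u⟫_ℂ with ht
  have hu2 : ‖u‖ ^ 2 = 1 := by rw [hu]; norm_num
  have hv2 : ‖v‖ ^ 2 = 1 := by rw [hv]; norm_num
  have hFu : (⟪u, A u⟫_ℂ).re - ε₀ * ‖u‖ ^ 2 ≤ Δ * ε := by rw [hu2]; linarith
  have hFv : (⟪v, A v⟫_ℂ).re - ε₀ * ‖v‖ ^ 2 ≤ Δ * ε := by rw [hv2]; linarith
  have hFu0 : 0 ≤ (⟪u, A u⟫_ℂ).re - ε₀ * ‖u‖ ^ 2 := by linarith [hε₀ u]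
  have hFv0 : 0 ≤ (⟪v, A v⟫_ℂ).re - ε₀ * ‖v‖ ^ 2 := by linarith [hε₀ v]
  have htb : ‖t‖ ≤ Δ * ε := by
    rcases eq_or_ne t 0 with h0 | h0
    · simp [h0]; positivity
    · set z : ℂ := t / ((‖t‖ : ℝ) : ℂ) with hz
      have habs : (‖t‖ : ℝ) ≠ 0 := norm_ne_zero_iff.mpr h0
      have hzcross : (z * (⟪u, A v⟫_ℂ - (ε₀ : ℂ) * ⟪u, v⟫_ℂ)).re = ‖t‖ := by
        have hconj : ⟪u, A v⟫_ℂ - (ε₀ : ℂ) * ⟪u, v⟫_ℂ = (starRingEnd ℂ) t := by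
          rw [ht, map_sub, map_mul, ← hsym u v, ← inner_conj_symm u v]
          simp [ha]
        rw [hconj, hz, div_mul_eq_mul_div, Complex.mul_conj]
        rw [← Complex.sq_norm]
        push_cast
        rw [sq, mul_div_assoc, div_self (by exact_mod_cast habs)]
        simp
      have hzn : Complex.normSq z = 1 := by
        rw [hz, Complex.normSq_div]
        simp only [Complex.normSq_eq_norm_sq, Complex.norm_real, Real.norm_eq_abs,
          abs_of_nonneg (norm_nonneg t)]
        field_simp
      have hFe := Fexp u v z
      have hpos := hε₀ (u - z • v)
      have key : 0 ≤ ((⟪u, A u⟫_ℂ).re - ε₀ * ‖u‖ ^ 2)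
          + ((⟪v, A v⟫_ℂ).re - ε₀ * ‖v‖ ^ 2) - 2 * ‖t‖ := by
        rw [← hzcross]
        calc (0:ℝ) ≤ (⟪u - z • v, A (u - z • v)⟫_ℂ).re - ε₀ * ‖u - z • v‖ ^ 2 := by
              linarith
          _ = _ := by rw [hFe, hzn]; ring
      linarith
  set w : E := v - a • u with hw
  have hvu : ⟪v, u⟫_ℂ = (starRingEnd ℂ) a := by rw [ha, inner_conj_symm]
  have huu : ⟪u, u⟫_ℂ = 1 := by rw [inner_self_eq_norm_sq_to_K, hu]; norm_num
  have hvv : ⟪v, v⟫_ℂ = 1 := by rw [inner_self_eq_norm_sq_to_K, hv]; norm_num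
  have hac : a * (starRingEnd ℂ) a = (c : ℂ) ^ 2 := by
    rw [Complex.mul_conj]
    norm_cast
    rw [hc, Complex.sq_norm]
  have hnw : ‖w‖ ^ 2 = 1 - c ^ 2 := by
    rw [← normsq, hw, cexp2 v u a, hvu, hvv, huu]
    have : (1:ℂ) - a * (starRingEnd ℂ) a
        - (starRingEnd ℂ) a * (starRingEnd ℂ) ((starRingEnd ℂ) a)
        + a * (starRingEnd ℂ) a * 1 = ((1 - c ^ 2 : ℝ) : ℂ) := by
      rw [Complex.conj_conj]
      push_cast
      linear_combination (-1 : ℂ) * hac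
    rw [this, Complex.ofReal_re]
  have hc1 : c < 1 := lt_of_le_of_lt hcβ hβ1
  have hd2pos : (0:ℝ) < 1 - c ^ 2 := by nlinarith
  have hwne : ‖w‖ ≠ 0 := by
    intro h
    rw [h] at hnw
    nlinarith
  have hwpos : 0 < ‖w‖ := lt_of_le_of_ne (norm_nonneg w) (Ne.symm hwne)
  have hFw : (⟪w, A w⟫_ℂ).re - ε₀ * ‖w‖ ^ 2 ≤ Δ * ε * (1 + c) ^ 2 := by
    have hexp := Fexp v u a
    have hcross : -(2 * (a * t).re) ≤ 2 * c * (Δ * ε) := by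
      have h1 : |(a * t).re| ≤ ‖a * t‖ := Complex.abs_re_le_norm _
      have h2 : ‖a * t‖ = c * ‖t‖ := by rw [norm_mul, hc]
      nlinarith [neg_abs_le ((a * t).re), norm_nonneg t]
    have hnsq : Complex.normSq a = c ^ 2 := by rw [hc, Complex.sq_norm]
    rw [hw, hexp, hnsq]
    nlinarith
  set d : ℝ := ‖w‖ with hd
  have hdpos : 0 < d := hwpos
  clear_value d w t c a
  refine ⟨u, ((d : ℂ))⁻¹ • w, hu, ?_, ?_, ?_, ?_, ?_, ?_⟩
  · rw [norm_smul, norm_inv]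
    simp only [Complex.norm_real, Real.norm_eq_abs, abs_of_nonneg hdpos.le]
    field_simp
    exact hd.symm
  · rw [inner_smul_right]
    have hzero : ⟪u, w⟫_ℂ = 0 := by
      rw [hw, inner_sub_right, inner_smul_right, huu]
      simp [ha]
    rw [hzero, mul_zero]
  · exact Submodule.subset_span (Set.mem_insert u {v})
  · apply Submodule.smul_mem
    rw [hw]
    apply Submodule.sub_mem
    · exact Submodule.subset_span (Set.mem_insert_of_mem u rfl)
    · exact Submodule.smul_mem _ _ (Submodule.subset_span (Set.mem_insert u {v}))
  · have hrat : Δ * ε ≤ Δ * ε * (1 + β) / (1 - β) := by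
      rw [le_div_iff₀ (by linarith)]
      nlinarith [mul_nonneg hΔ hε]
    linarith
  · have hinner : (⟪((d:ℂ))⁻¹ • w, A (((d:ℂ))⁻¹ • w)⟫_ℂ).re
        = (d ^ 2)⁻¹ * (⟪w, A w⟫_ℂ).re := by
      rw [map_smul, inner_smul_left, inner_smul_right, ← mul_assoc]
      have hco : (starRingEnd ℂ) ((d:ℂ))⁻¹ * ((d:ℂ))⁻¹ = (((d ^ 2 : ℝ)⁻¹ : ℝ) : ℂ) := by
        rw [map_inv₀, Complex.conj_ofReal]
        push_cast
        ring
      rw [hco]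
      simp only [Complex.mul_re, Complex.ofReal_re, Complex.ofReal_im]
      ring
    rw [hinner]
    have hd2 : d ^ 2 = 1 - c ^ 2 := hnw
    have h1β : (0:ℝ) < 1 - β := by linarith
    have hfinal : Δ * ε * (1 + c) ^ 2 ≤ (Δ * ε * (1 + β) / (1 - β)) * (1 - c ^ 2) := by
      rw [div_mul_eq_mul_div, le_div_iff₀ h1β]
      nlinarith [mul_nonneg (mul_nonneg hΔ hε)
        (mul_nonneg (by linarith : (0:ℝ) ≤ 1 + c) (by linarith : (0:ℝ) ≤ β - c))]
    rw [hd2, inv_mul_le_iff₀ hd2pos]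
    rw [hnw] at hFw
    nlinarith [hFw, hfinal]
end

section
/- Let H be a Hermitian operator with least eigenvalue ε₀, spectral gap ε, and ground space of dimension g (ground space projector G of rank g; all other eigenvalues ≥ ε₀ + ε). If a density matrix σ satisfies Tr(σH) ≤ ε₀ + Δε/(2g+1) with Δ ≤ 1/(3g), then any eigenvector of σ corresponding to its largest eigenvalue is a unit vector |ψ⟩ with ⟨ψ|H|ψ⟩ ≤ ε₀ + Δε. -/
open scoped InnerProductSpace

section Aux

variable {E : Type*} [NormedAddCommGroup E] [InnerProductSpace ℂ E] [FiniteDimensional ℂ E]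

private lemma trace_onb' {ι : Type*} [Fintype ι] [DecidableEq ι]
    (b : OrthonormalBasis ι ℂ E) (f : E →ₗ[ℂ] E) :
    LinearMap.trace ℂ E f = ∑ i, ⟪b i, f (b i)⟫_ℂ := by
  rw [LinearMap.trace_eq_matrix_trace ℂ b.toBasis f, Matrix.trace]
  refine Finset.sum_congr rfl fun i _ => ?_
  rw [Matrix.diag_apply, LinearMap.toMatrix_apply, OrthonormalBasis.coe_toBasis,
    OrthonormalBasis.coe_toBasis_repr_apply, OrthonormalBasis.repr_apply_apply]

private lemma trace_comp_nonneg' (M N : E →L[ℂ] E)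
    (hN : (N : E →ₗ[ℂ] E).IsSymmetric)
    (hM : ∀ w : E, 0 ≤ (⟪w, M w⟫_ℂ).re) (hNpos : ∀ w : E, 0 ≤ (⟪w, N w⟫_ℂ).re) :
    0 ≤ (LinearMap.trace ℂ E ((M : E →ₗ[ℂ] E) ∘ₗ (N : E →ₗ[ℂ] E))).re := by
  set b := hN.eigenvectorBasis (rfl : Module.finrank ℂ E = Module.finrank ℂ E) with hb
  set lam := hN.eigenvalues (rfl : Module.finrank ℂ E = Module.finrank ℂ E) with hlam
  rw [trace_onb' b, Complex.re_sum]
  refine Finset.sum_nonneg fun i _ => ?_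
  have h1 : (N : E →ₗ[ℂ] E) (b i) = ((lam i : ℝ) : ℂ) • b i :=
    hN.apply_eigenvectorBasis rfl i
  have hbi : ‖b i‖ = 1 := b.orthonormal.1 i
  have hlnn : 0 ≤ lam i := by
    have h0 := hNpos (b i)
    have h2 : (⟪b i, N (b i)⟫_ℂ) = ((lam i : ℝ) : ℂ) := by
      have h3 : N (b i) = ((lam i : ℝ) : ℂ) • b i := h1
      rw [h3, inner_smul_right, inner_self_eq_norm_sq_to_K, hbi]
      push_cast; ring
    rw [h2] at h0
    simpa using h0
  have h3 : ((M : E →ₗ[ℂ] E) ∘ₗ (N : E →ₗ[ℂ] E)) (b i) = ((lam i : ℝ) : ℂ) • M (b i) := by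
    simp [LinearMap.comp_apply, h1]
  rw [h3, inner_smul_right]
  rw [Complex.re_ofReal_mul]
  exact mul_nonneg hlnn (hM (b i))

private lemma trace_comp_rankOne' (f : E →ₗ[ℂ] E) (ψ : E) :
    LinearMap.trace ℂ E (f ∘ₗ (((innerSL ℂ ψ).smulRight ψ : E →L[ℂ] E) : E →ₗ[ℂ] E))
      = ⟪ψ, f ψ⟫_ℂ := by
  set b := stdOrthonormalBasis ℂ E
  rw [trace_onb' b]
  have h1 : ∀ i, (f ∘ₗ (((innerSL ℂ ψ).smulRight ψ : E →L[ℂ] E) : E →ₗ[ℂ] E)) (b i)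
      = ⟪ψ, b i⟫_ℂ • f ψ := by
    intro i
    simp [LinearMap.comp_apply, ContinuousLinearMap.smulRight_apply]
  calc ∑ i, ⟪b i, (f ∘ₗ (((innerSL ℂ ψ).smulRight ψ : E →L[ℂ] E) : E →ₗ[ℂ] E)) (b i)⟫_ℂ
      = ∑ i, ⟪ψ, b i⟫_ℂ * ⟪b i, f ψ⟫_ℂ := by
        refine Finset.sum_congr rfl fun i _ => ?_
        rw [h1 i, inner_smul_right]
    _ = ⟪ψ, f ψ⟫_ℂ := b.sum_inner_mul_inner ψ (f ψ)

private lemma pythag' (G : E →L[ℂ] E) (hGsa : IsSelfAdjoint G) (hGidem : G ∘L G = G)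
    (u : E) : ‖G u‖ ^ 2 + ‖u - G u‖ ^ 2 = ‖u‖ ^ 2 := by
  have hsymG := hGsa.isSymmetric
  have hGG : G (G u) = G u := by
    have := congrArg (fun T : E →L[ℂ] E => T u) hGidem
    simpa using this
  have hsymG' : ∀ x y : E, ⟪G x, y⟫_ℂ = ⟪x, G y⟫_ℂ := fun x y => hsymG x y
  have horth : ⟪G u, u - G u⟫_ℂ = 0 := by
    rw [hsymG']
    simp [map_sub, hGG]
  have hu : u = G u + (u - G u) := by abel
  have := norm_add_sq (𝕜 := ℂ) (G u) (u - G u)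
  rw [← hu, horth] at this
  simp at this
  linarith

private lemma energy_lb' (A G : E →L[ℂ] E) (ε₀ ε : ℝ)
    (hA : IsSelfAdjoint A) (hGsa : IsSelfAdjoint G) (hGidem : G ∘L G = G)
    (hground : A ∘L G = (ε₀ : ℂ) • G)
    (hgap : ∀ u : E, G u = 0 → (ε₀ + ε) * ‖u‖ ^ 2 ≤ (⟪u, A u⟫_ℂ).re)
    (u : E) :
    ε₀ * ‖G u‖ ^ 2 + (ε₀ + ε) * ‖u - G u‖ ^ 2 ≤ (⟪u, A u⟫_ℂ).re := by
  have hsymG := hGsa.isSymmetric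
  have hsymA := hA.isSymmetric
  set v := u - G u with hv
  have hGG : G (G u) = G u := by
    have := congrArg (fun T : E →L[ℂ] E => T u) hGidem
    simpa using this
  have hGv : G v = 0 := by simp [hv, map_sub, hGG]
  have hAg : A (G u) = (ε₀ : ℂ) • G u := by
    have := congrArg (fun T : E →L[ℂ] E => T u) hground
    simpa using this
  have hsymG' : ∀ x y : E, ⟪G x, y⟫_ℂ = ⟪x, G y⟫_ℂ := fun x y => hsymG x y
  have hsymA' : ∀ x y : E, ⟪A x, y⟫_ℂ = ⟪x, A y⟫_ℂ := fun x y => hsymA x y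
  have horth : ⟪G u, v⟫_ℂ = 0 := by rw [hsymG']; simp [hGv]
  have horth' : ⟪v, G u⟫_ℂ = 0 := by rw [← hsymG']; simp [hGv]
  have hinner : ⟪u, A u⟫_ℂ = (ε₀ : ℂ) * ⟪G u, G u⟫_ℂ + ⟪v, A v⟫_ℂ := by
    have hu : u = G u + v := by simp [hv]
    have hAu : A u = (ε₀ : ℂ) • G u + A v := by
      conv_lhs => rw [hu]
      rw [map_add, hAg]
    have hGAv : ⟪G u, A v⟫_ℂ = 0 := by
      have h5 : ⟪G u, A v⟫_ℂ = ⟪A (G u), v⟫_ℂ := (hsymA' (G u) v).symm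
      rw [h5, hAg, inner_smul_left, horth, mul_zero]
    calc ⟪u, A u⟫_ℂ = ⟪G u + v, (ε₀ : ℂ) • G u + A v⟫_ℂ := by rw [← hu, ← hAu]
      _ = ⟪G u, (ε₀:ℂ) • G u⟫_ℂ + ⟪G u, A v⟫_ℂ + (⟪v, (ε₀:ℂ) • G u⟫_ℂ + ⟪v, A v⟫_ℂ) := by
          rw [inner_add_left, inner_add_right, inner_add_right]
      _ = (ε₀ : ℂ) * ⟪G u, G u⟫_ℂ + ⟪v, A v⟫_ℂ := by
          rw [hGAv, inner_smul_right, inner_smul_right, horth']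
          ring
  have hre : (⟪u, A u⟫_ℂ).re = ε₀ * ‖G u‖ ^ 2 + (⟪v, A v⟫_ℂ).re := by
    have hGG2 : (⟪G u, G u⟫_ℂ) = ((‖G u‖ ^ 2 : ℝ) : ℂ) := by
      rw [inner_self_eq_norm_sq_to_K]; norm_cast
    rw [hinner, Complex.add_re, hGG2, ← Complex.ofReal_mul, Complex.ofReal_re]
  have hgapv := hgap v hGv
  rw [hre]
  linarith

end Aux

set_option maxHeartbeats 1000000 in
/-- Demixing lemma: if a density matrix `σ` has energy at most `ε₀ + Δε/(2g+1)` with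
`Δ ≤ 1/(3g)`, for a gapped Hamiltonian with `g`-dimensional ground space, then any
eigenvector of `σ` for its largest eigenvalue has energy at most `ε₀ + Δε`. -/
theorem demixing_lemma {E : Type*} [NormedAddCommGroup E]
    [InnerProductSpace ℂ E] [FiniteDimensional ℂ E]
    (A G σ : E →L[ℂ] E) (ε₀ ε Δ μ : ℝ) (g : ℕ) (ψ : E)
    (hA : IsSelfAdjoint A)
    (hGsa : IsSelfAdjoint G) (hGidem : G ∘L G = G)
    (hground : A ∘L G = (ε₀ : ℂ) • G)
    (hgap : ∀ u : E, G u = 0 → (ε₀ + ε) * ‖u‖ ^ 2 ≤ (⟪u, A u⟫_ℂ).re)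
    (hrank : Module.finrank ℂ (LinearMap.range (G : E →ₗ[ℂ] E)) = g)
    (hg : 1 ≤ g) (hε : 0 < ε)
    (hσsa : IsSelfAdjoint σ)
    (hσpos : ∀ w : E, 0 ≤ (⟪w, σ w⟫_ℂ).re)
    (hσtr : LinearMap.trace ℂ E (σ : E →ₗ[ℂ] E) = 1)
    (hΔ0 : 0 ≤ Δ) (hΔ : Δ ≤ 1 / (3 * (g : ℝ)))
    (henergy : (LinearMap.trace ℂ E ((A : E →ₗ[ℂ] E) ∘ₗ (σ : E →ₗ[ℂ] E))).re ≤
      ε₀ + Δ * ε / (2 * (g : ℝ) + 1))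
    (hψ : ‖ψ‖ = 1) (hψeig : σ ψ = (μ : ℂ) • ψ)
    (hμmax : ∀ (c : ℂ) (w : E), w ≠ 0 → σ w = c • w → c.re ≤ μ) :
    (⟪ψ, A ψ⟫_ℂ).re ≤ ε₀ + Δ * ε := by
  classical
  have hsymσ : (σ : E →ₗ[ℂ] E).IsSymmetric := hσsa.isSymmetric
  have hsymσ' : ∀ x y : E, ⟪σ x, y⟫_ℂ = ⟪x, σ y⟫_ℂ := fun x y => hsymσ x y
  set b := hsymσ.eigenvectorBasis (rfl : Module.finrank ℂ E = Module.finrank ℂ E) with hb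
  set lam := hsymσ.eigenvalues (rfl : Module.finrank ℂ E = Module.finrank ℂ E) with hlamdef
  have heig : ∀ i, σ (b i) = ((lam i : ℝ) : ℂ) • b i := fun i =>
    hsymσ.apply_eigenvectorBasis rfl i
  have hbnorm : ∀ i, ‖b i‖ = 1 := fun i => b.orthonormal.1 i
  have hbinner : ∀ i, ⟪b i, b i⟫_ℂ = 1 := fun i => by
    rw [inner_self_eq_norm_sq_to_K, hbnorm i]; norm_num
  have hlam_le : ∀ i, lam i ≤ μ := by
    intro i
    have hne : b i ≠ 0 := fun h => by simpa [h] using hbnorm i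
    have := hμmax ((lam i : ℝ) : ℂ) (b i) hne (heig i)
    simpa using this
  have hlam_nonneg : ∀ i, 0 ≤ lam i := by
    intro i
    have h0 := hσpos (b i)
    rw [heig i, inner_smul_right, hbinner i, mul_one] at h0
    simpa using h0
  have hsum1 : ∑ i, lam i = 1 := by
    have ht := trace_onb' b (σ : E →ₗ[ℂ] E)
    rw [hσtr] at ht
    have h2 : ∀ i, ⟪b i, (σ : E →ₗ[ℂ] E) (b i)⟫_ℂ = ((lam i : ℝ) : ℂ) := fun i => by
      have h3 : (σ : E →ₗ[ℂ] E) (b i) = ((lam i : ℝ) : ℂ) • b i := heig i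
      rw [h3, inner_smul_right, hbinner i, mul_one]
    rw [Finset.sum_congr rfl (fun i _ => h2 i)] at ht
    have h4 := congrArg Complex.re ht
    rw [Complex.re_sum] at h4
    simpa using h4.symm
  have hGG : ∀ x : E, G (G x) = G x := fun x => by
    have := congrArg (fun T : E →L[ℂ] E => T x) hGidem; simpa using this
  have hsymG' : ∀ x y : E, ⟪G x, y⟫_ℂ = ⟪x, G y⟫_ℂ := fun x y => hGsa.isSymmetric x y
  have hGquad : ∀ u : E, ⟪u, G u⟫_ℂ = ((‖G u‖ ^ 2 : ℝ) : ℂ) := by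
    intro u
    have h1 : ⟪u, G u⟫_ℂ = ⟪G u, G u⟫_ℂ := by
      conv_lhs => rw [← hGG u]
      rw [← hsymG' u (G u)]
    rw [h1, inner_self_eq_norm_sq_to_K]; norm_cast
  have htrG : LinearMap.trace ℂ E (G : E →ₗ[ℂ] E) = (g : ℂ) := by
    have hproj : LinearMap.IsProj (LinearMap.range (G : E →ₗ[ℂ] E)) (G : E →ₗ[ℂ] E) := by
      refine ⟨fun x => LinearMap.mem_range_self _ x, ?_⟩
      rintro x ⟨y, rfl⟩
      exact hGG y
    rw [hproj.trace, hrank]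
  have hsumq : ∑ i, ‖G (b i)‖ ^ 2 = (g : ℝ) := by
    have ht := trace_onb' b (G : E →ₗ[ℂ] E)
    rw [htrG] at ht
    have h2 : ∀ i, ⟪b i, (G : E →ₗ[ℂ] E) (b i)⟫_ℂ = ((‖G (b i)‖ ^ 2 : ℝ) : ℂ) := fun i =>
      hGquad (b i)
    rw [Finset.sum_congr rfl (fun i _ => h2 i)] at ht
    have h4 := congrArg Complex.re ht
    rw [Complex.re_sum] at h4
    simp only [Complex.ofReal_re, Complex.natCast_re] at h4
    exact h4.symm
  have hA_lb : ∀ i, ε₀ + ε * (1 - ‖G (b i)‖ ^ 2) ≤ (⟪b i, A (b i)⟫_ℂ).re := by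
    intro i
    have h1 := energy_lb' A G ε₀ ε hA hGsa hGidem hground hgap (b i)
    have h2 := pythag' G hGsa hGidem (b i)
    rw [hbnorm i] at h2
    norm_num at h2
    have hb' : ‖b i - G (b i)‖ ^ 2 = 1 - ‖G (b i)‖ ^ 2 := by linarith
    rw [hb'] at h1
    have e : ε₀ + ε * (1 - ‖G (b i)‖ ^ 2)
        = ε₀ * ‖G (b i)‖ ^ 2 + (ε₀ + ε) * (1 - ‖G (b i)‖ ^ 2) := by ring
    rw [e]
    exact h1
  have htrAσ : (LinearMap.trace ℂ E ((A : E →ₗ[ℂ] E) ∘ₗ (σ : E →ₗ[ℂ] E))).re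
      = ∑ i, lam i * (⟪b i, A (b i)⟫_ℂ).re := by
    rw [trace_onb' b, Complex.re_sum]
    refine Finset.sum_congr rfl fun i _ => ?_
    have h1 : ((A : E →ₗ[ℂ] E) ∘ₗ (σ : E →ₗ[ℂ] E)) (b i) = ((lam i : ℝ) : ℂ) • A (b i) := by
      simp [LinearMap.comp_apply, heig i]
    rw [h1, inner_smul_right, Complex.re_ofReal_mul]
  set S := ∑ i, lam i * ‖G (b i)‖ ^ 2 with hS
  have hS_le : S ≤ μ * (g : ℝ) := by
    rw [hS, ← hsumq, Finset.mul_sum]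
    exact Finset.sum_le_sum fun i _ =>
      mul_le_mul_of_nonneg_right (hlam_le i) (sq_nonneg _)
  have hgR : (1 : ℝ) ≤ (g : ℝ) := by exact_mod_cast hg
  have hgpos : (0 : ℝ) < 2 * (g : ℝ) + 1 := by linarith
  have hS_ge : 1 - Δ / (2 * (g : ℝ) + 1) ≤ S := by
    have hlb : ε₀ + ε * (1 - S) ≤ ∑ i, lam i * (⟪b i, A (b i)⟫_ℂ).re := by
      have e1 : ∑ i, lam i * (ε₀ + ε * (1 - ‖G (b i)‖ ^ 2))
          = (ε₀ + ε) * (∑ i, lam i) - ε * S := by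
        rw [hS, Finset.mul_sum, Finset.mul_sum, ← Finset.sum_sub_distrib]
        exact Finset.sum_congr rfl fun i _ => by ring
      have e2 : ∑ i, lam i * (ε₀ + ε * (1 - ‖G (b i)‖ ^ 2))
          ≤ ∑ i, lam i * (⟪b i, A (b i)⟫_ℂ).re :=
        Finset.sum_le_sum fun i _ => mul_le_mul_of_nonneg_left (hA_lb i) (hlam_nonneg i)
      rw [e1, hsum1] at e2
      linarith
    rw [← htrAσ] at hlb
    have h2 : ε * (1 - S) ≤ Δ * ε / (2 * (g : ℝ) + 1) := by linarith
    have h3 : (1 - S) * ε ≤ (Δ / (2 * (g : ℝ) + 1)) * ε := by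
      have e : Δ * ε / (2 * (g : ℝ) + 1) = (Δ / (2 * (g : ℝ) + 1)) * ε := by ring
      linarith [h2, e ▸ h2]
    have h4 := (mul_le_mul_iff_of_pos_right hε).mp h3
    linarith
  have h3gΔ : Δ * (3 * (g : ℝ)) ≤ 1 := by
    have h30 : (0 : ℝ) < 3 * (g : ℝ) := by linarith
    exact (le_div_iff₀ h30).mp hΔ
  have hΔ13 : Δ ≤ 1 / 3 := by nlinarith
  have hs0 : 0 ≤ Δ / (2 * (g : ℝ) + 1) := by positivity
  have hsle : Δ / (2 * (g : ℝ) + 1) ≤ Δ := div_le_self hΔ0 (by linarith)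
  have hμg : 1 - Δ / (2 * (g : ℝ) + 1) ≤ μ * (g : ℝ) := le_trans hS_ge hS_le
  have hμpos : 0 < μ := by
    by_contra hcon
    push_neg at hcon
    nlinarith [mul_nonneg (neg_nonneg.2 hcon) (by positivity : (0:ℝ) ≤ (g:ℝ))]
  -- rank-one projection onto ψ
  set Q : E →L[ℂ] E := (innerSL ℂ ψ).smulRight ψ with hQ
  have hQapp : ∀ w : E, Q w = ⟪ψ, w⟫_ℂ • ψ := fun w => rfl
  have hψψ : ⟪ψ, ψ⟫_ℂ = 1 := by
    rw [inner_self_eq_norm_sq_to_K, hψ]; norm_num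
  have hdom : ∀ w : E, μ * Complex.normSq ⟪ψ, w⟫_ℂ ≤ (⟪w, σ w⟫_ℂ).re := by
    intro w
    set c := ⟪ψ, w⟫_ℂ with hc
    set p := w - c • ψ with hp
    have hψp : ⟪ψ, p⟫_ℂ = 0 := by
      rw [hp, inner_sub_right, inner_smul_right, hψψ, mul_one, ← hc, sub_self]
    have hpψ : ⟪p, ψ⟫_ℂ = 0 := by
      rw [← inner_conj_symm, hψp, map_zero]
    have hw : w = c • ψ + p := by rw [hp]; abel
    have hσp : ⟪ψ, σ p⟫_ℂ = 0 := by
      rw [← hsymσ' ψ p, hψeig, inner_smul_left, hψp, mul_zero]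
    have hexp : ⟪w, σ w⟫_ℂ = ((μ * Complex.normSq c : ℝ) : ℂ) + ⟪p, σ p⟫_ℂ := by
      have hσw : σ w = (c * (μ : ℂ)) • ψ + σ p := by
        conv_lhs => rw [hw]
        rw [map_add, map_smul, hψeig, smul_smul]
      rw [hσw]
      nth_rewrite 1 [hw]
      simp only [inner_add_left, inner_add_right, inner_smul_left, inner_smul_right,
        hψψ, hσp, hpψ, mul_one, mul_zero, add_zero, zero_add]
      have hcc : (starRingEnd ℂ) c * c = ((Complex.normSq c : ℝ) : ℂ) := by
        rw [mul_comm, Complex.mul_conj]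
      push_cast
      linear_combination (μ : ℂ) * hcc
    rw [hexp, Complex.add_re, Complex.ofReal_re]
    have := hσpos p
    linarith
  -- M = A - ε₀ • 1 has nonnegative quadratic form
  have hMpos : ∀ w : E, 0 ≤ (⟪w, (A - (ε₀ : ℂ) • (1 : E →L[ℂ] E)) w⟫_ℂ).re := by
    intro w
    have h1 : (A - (ε₀ : ℂ) • (1 : E →L[ℂ] E)) w = A w - (ε₀ : ℂ) • w := by
      simp
    rw [h1, inner_sub_right, inner_smul_right, Complex.sub_re]
    have h2 := energy_lb' A G ε₀ ε hA hGsa hGidem hground hgap w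
    have h3 := pythag' G hGsa hGidem w
    have h4 : ⟪w, w⟫_ℂ = ((‖w‖ ^ 2 : ℝ) : ℂ) := by
      rw [inner_self_eq_norm_sq_to_K]; norm_cast
    rw [h4, ← Complex.ofReal_mul, Complex.ofReal_re]
    have e1 : ε₀ * ‖w‖ ^ 2 = ε₀ * ‖G w‖ ^ 2 + ε₀ * ‖w - G w‖ ^ 2 := by rw [← h3]; ring
    have e2 : (ε₀ + ε) * ‖w - G w‖ ^ 2 = ε₀ * ‖w - G w‖ ^ 2 + ε * ‖w - G w‖ ^ 2 := by ring
    linarith [h2, mul_nonneg hε.le (sq_nonneg ‖w - G w‖)]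
  -- N = σ - μ • Q is symmetric with nonnegative quadratic form
  have hQsym : ∀ x y : E, ⟪Q x, y⟫_ℂ = ⟪x, Q y⟫_ℂ := by
    intro x y
    rw [hQapp, hQapp, inner_smul_left, inner_smul_right, inner_conj_symm]
    ring
  have hNsym : ((σ - (μ : ℂ) • Q : E →L[ℂ] E) : E →ₗ[ℂ] E).IsSymmetric := by
    intro x y
    have h1 : ((σ - (μ : ℂ) • Q : E →L[ℂ] E) : E →ₗ[ℂ] E) x = σ x - (μ : ℂ) • Q x := by simp
    have h2 : ((σ - (μ : ℂ) • Q : E →L[ℂ] E) : E →ₗ[ℂ] E) y = σ y - (μ : ℂ) • Q y := by simp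
    rw [h1, h2, inner_sub_left, inner_sub_right, inner_smul_left, inner_smul_right,
      hsymσ' x y, hQsym x y, Complex.conj_ofReal]
  have hNpos : ∀ w : E, 0 ≤ (⟪w, (σ - (μ : ℂ) • Q : E →L[ℂ] E) w⟫_ℂ).re := by
    intro w
    have h1 : (σ - (μ : ℂ) • Q : E →L[ℂ] E) w = σ w - (μ : ℂ) • (⟪ψ, w⟫_ℂ • ψ) := by
      simp [hQapp]
    rw [h1, inner_sub_right, inner_smul_right, inner_smul_right, Complex.sub_re]
    have h2 : ⟪w, ψ⟫_ℂ = (starRingEnd ℂ) ⟪ψ, w⟫_ℂ := by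
      rw [inner_conj_symm]
    have h3 : ((μ : ℂ) * (⟪ψ, w⟫_ℂ * ⟪w, ψ⟫_ℂ)).re = μ * Complex.normSq ⟪ψ, w⟫_ℂ := by
      rw [h2, Complex.mul_conj, Complex.re_ofReal_mul]
      norm_cast
    rw [h3]
    linarith [hdom w]
  have htr0 := trace_comp_nonneg' (A - (ε₀ : ℂ) • (1 : E →L[ℂ] E)) (σ - (μ : ℂ) • Q)
    hNsym hMpos hNpos
  have hexp : (((A - (ε₀ : ℂ) • (1 : E →L[ℂ] E)) : E →L[ℂ] E) : E →ₗ[ℂ] E) ∘ₗ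
        (((σ - (μ : ℂ) • Q) : E →L[ℂ] E) : E →ₗ[ℂ] E)
      = (A : E →ₗ[ℂ] E) ∘ₗ (σ : E →ₗ[ℂ] E) - (μ : ℂ) • ((A : E →ₗ[ℂ] E) ∘ₗ (Q : E →ₗ[ℂ] E))
        - (ε₀ : ℂ) • (σ : E →ₗ[ℂ] E) + ((ε₀ : ℂ) * (μ : ℂ)) • (Q : E →ₗ[ℂ] E) := by
    ext x
    simp only [LinearMap.comp_apply, LinearMap.sub_apply, LinearMap.add_apply,
      LinearMap.smul_apply, ContinuousLinearMap.coe_coe, ContinuousLinearMap.coe_sub,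
      ContinuousLinearMap.coe_smul, ContinuousLinearMap.sub_apply,
      ContinuousLinearMap.smul_apply, ContinuousLinearMap.one_apply, map_sub, map_smul]
    module
  rw [hexp, map_add, map_sub, map_sub, map_smul, map_smul, map_smul] at htr0
  have hAQ : LinearMap.trace ℂ E ((A : E →ₗ[ℂ] E) ∘ₗ (Q : E →ₗ[ℂ] E)) = ⟪ψ, A ψ⟫_ℂ := by
    have h1 := trace_comp_rankOne' (A : E →ₗ[ℂ] E) ψ
    rw [← hQ] at h1
    simpa using h1
  have hQtr : LinearMap.trace ℂ E (Q : E →ₗ[ℂ] E) = 1 := by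
    have h1 := trace_comp_rankOne' (LinearMap.id : E →ₗ[ℂ] E) ψ
    rw [← hQ, LinearMap.id_comp] at h1
    rw [h1]
    simpa using hψψ
  rw [hAQ, hQtr, hσtr] at htr0
  have hre : ((LinearMap.trace ℂ E ((A : E →ₗ[ℂ] E) ∘ₗ (σ : E →ₗ[ℂ] E)))
        - (μ : ℂ) • ⟪ψ, A ψ⟫_ℂ - (ε₀ : ℂ) • (1 : ℂ) + ((ε₀ : ℂ) * (μ : ℂ)) • (1 : ℂ)).re
      = (LinearMap.trace ℂ E ((A : E →ₗ[ℂ] E) ∘ₗ (σ : E →ₗ[ℂ] E))).re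
        - μ * (⟪ψ, A ψ⟫_ℂ).re - ε₀ + ε₀ * μ := by
    simp [Complex.sub_re, Complex.add_re, smul_eq_mul, Complex.re_ofReal_mul,
      Complex.mul_re, Complex.ofReal_re, Complex.ofReal_im]
  rw [hre] at htr0
  have hfin : μ * ((⟪ψ, A ψ⟫_ℂ).re - ε₀) ≤ Δ * ε / (2 * (g : ℝ) + 1) := by
    nlinarith [henergy, htr0]
  set X := (⟪ψ, A ψ⟫_ℂ).re with hX
  rcases le_or_gt X ε₀ with hcase | hcase
  · nlinarith [mul_nonneg hΔ0 hε.le]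
  · set s := Δ / (2 * (g : ℝ) + 1) with hsdef
    have hsΔ : s * (2 * (g : ℝ) + 1) = Δ := by
      rw [hsdef]; field_simp
    have k1 : (1 - s) * (X - ε₀) ≤ (μ * (g : ℝ)) * (X - ε₀) :=
      mul_le_mul_of_nonneg_right hμg (by linarith)
    have k2 : (g : ℝ) * (μ * (X - ε₀)) ≤ (g : ℝ) * (s * ε) := by
      have e : Δ * ε / (2 * (g : ℝ) + 1) = s * ε := by rw [hsdef]; ring
      exact mul_le_mul_of_nonneg_left (by linarith [hfin, e ▸ hfin]) (by positivity)
    have k3 : (1 - s) * (X - ε₀) ≤ (g : ℝ) * (s * ε) := by nlinarith [k1, k2]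
    have h1s : 0 < 1 - s := by nlinarith
    have hfact : (g : ℝ) ≤ (1 - s) * (2 * (g : ℝ) + 1) := by nlinarith [hsΔ]
    have k4 : (g : ℝ) * (s * ε) ≤ ((1 - s) * (2 * (g : ℝ) + 1)) * (s * ε) :=
      mul_le_mul_of_nonneg_right hfact (mul_nonneg hs0 hε.le)
    have k5 : (1 - s) * (X - ε₀) ≤ (1 - s) * (Δ * ε) := by
      have e : ((1 - s) * (2 * (g : ℝ) + 1)) * (s * ε)
          = (1 - s) * ((s * (2 * (g : ℝ) + 1)) * ε) := by ring
      rw [e, hsΔ] at k4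
      linarith
    have k6 : X - ε₀ ≤ Δ * ε := le_of_mul_le_mul_left k5 h1s
    linarith
end

section
/- Consider a 1D chain Hamiltonian H = Σ_{j=1}^{n-1} H_j with 0 ≤ H_j ≤ 1, each H_j acting only on tensor factors j and j+1. Fix a cut i, set H_L = Σ_{j<i} H_j, H_M = H_i, H_R = Σ_{j>i} H_j. If |v₁⟩, |v₂⟩ are unit vectors each with energy ⟨v_k|H|v_k⟩ ≤ E₀ + ΔE where E₀ is the ground energy, then |⟨v₁|H_L|v₁⟩ - ⟨v₂|H_L|v₂⟩| ≤ 1 + ΔE. -/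
open Matrix
open scoped Kronecker ComplexOrder

/- ### Auxiliary lemmas -/

/-- Rayleigh lower bound for Hermitian matrices over ℂ. -/
lemma aux_rayleigh {m : ℕ} {C : Matrix (Fin m) (Fin m) ℂ} (hC : C.IsHermitian)
    (c : ℝ) (hc : ∀ i, c ≤ hC.eigenvalues i) (x : Fin m → ℂ) :
    c * (star x ⬝ᵥ x).re ≤ (star x ⬝ᵥ (C *ᵥ x)).re := by
  set U : Matrix (Fin m) (Fin m) ℂ := (hC.eigenvectorUnitary : Matrix (Fin m) (Fin m) ℂ) with hU
  have hUU : U * star U = 1 := mem_unitaryGroup_iff.mp hC.eigenvectorUnitary.2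
  set y : Fin m → ℂ := (star U) *ᵥ x with hy
  have hsy : star y = star x ᵥ* U := by
    rw [hy, star_mulVec, star_eq_conjTranspose, conjTranspose_conjTranspose]
  have hxy : star x ⬝ᵥ x = star y ⬝ᵥ y := by
    rw [hsy, hy, ← dotProduct_mulVec, mulVec_mulVec, hUU, one_mulVec]
  have hquad : star x ⬝ᵥ (C *ᵥ x)
      = star y ⬝ᵥ ((diagonal (Complex.ofReal ∘ hC.eigenvalues)) *ᵥ y) := by
    conv_lhs => rw [hC.spectral_theorem, Unitary.conjStarAlgAut_apply]
    rw [← mulVec_mulVec, ← mulVec_mulVec]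
    conv_lhs => rw [dotProduct_mulVec]
    rw [← hsy, hy]
    rfl
  have hdiag : (star y ⬝ᵥ ((diagonal (Complex.ofReal ∘ hC.eigenvalues)) *ᵥ y)).re
      = ∑ i, hC.eigenvalues i * Complex.normSq (y i) := by
    simp only [dotProduct, mulVec_diagonal, Function.comp, Pi.star_apply, Complex.re_sum]
    congr 1; ext i
    simp [Complex.mul_re, Complex.normSq_apply]; try ring
  have hnorm : (star y ⬝ᵥ y).re = ∑ i, Complex.normSq (y i) := by
    simp only [dotProduct, Pi.star_apply, Complex.re_sum]
    congr 1; ext i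
    simp [Complex.mul_re, Complex.normSq_apply]; try ring
  rw [hquad, hdiag, hxy, hnorm, Finset.mul_sum]
  exact Finset.sum_le_sum fun i _ =>
    mul_le_mul_of_nonneg_right (hc i) (Complex.normSq_nonneg _)

/-- Eigenvectors from `eigenvectorBasis` are unit vectors. -/
lemma aux_unit {m : ℕ} {C : Matrix (Fin m) (Fin m) ℂ} (hC : C.IsHermitian) (i : Fin m) :
    star ⇑(hC.eigenvectorBasis i) ⬝ᵥ ⇑(hC.eigenvectorBasis i) = 1 := by
  have h1 := hC.eigenvectorBasis.orthonormal.1 i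
  have h2 : (inner ℂ (hC.eigenvectorBasis i) (hC.eigenvectorBasis i) : ℂ) = 1 := by
    rw [inner_self_eq_norm_sq_to_K, h1]; norm_num
  rw [EuclideanSpace.inner_eq_star_dotProduct] at h2
  rwa [dotProduct_comm] at h2

lemma aux_sub_smul_re {n : Type*} [Fintype n] [DecidableEq n]
    (C : Matrix n n ℂ) (c : ℝ) (x : n → ℂ) :
    (star x ⬝ᵥ ((C - (c : ℂ) • 1) *ᵥ x)).re
      = (star x ⬝ᵥ (C *ᵥ x)).re - c * (star x ⬝ᵥ x).re := by
  rw [sub_mulVec, dotProduct_sub, smul_mulVec, one_mulVec, dotProduct_smul,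
    Complex.sub_re]
  simp [smul_eq_mul, Complex.mul_re]

lemma aux_kron_one_dot {l r : ℕ} (C : Matrix (Fin l) (Fin l) ℂ) (v : Fin l × Fin r → ℂ) :
    star v ⬝ᵥ ((C ⊗ₖ (1 : Matrix (Fin r) (Fin r) ℂ)) *ᵥ v)
      = ∑ j : Fin r, star (fun i => v (i, j)) ⬝ᵥ (C *ᵥ fun i => v (i, j)) := by
  simp only [dotProduct, mulVec, kroneckerMap_apply, one_apply, Fintype.sum_prod_type,
    Pi.star_apply, mul_ite, mul_one, mul_zero, ite_mul, zero_mul]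
  rw [Finset.sum_comm]
  refine Finset.sum_congr rfl fun j _ => Finset.sum_congr rfl fun i _ => ?_
  congr 1
  rw [Finset.sum_comm]
  simp

lemma aux_one_kron_dot {l r : ℕ} (B : Matrix (Fin r) (Fin r) ℂ) (v : Fin l × Fin r → ℂ) :
    star v ⬝ᵥ (((1 : Matrix (Fin l) (Fin l) ℂ) ⊗ₖ B) *ᵥ v)
      = ∑ i : Fin l, star (fun j => v (i, j)) ⬝ᵥ (B *ᵥ fun j => v (i, j)) := by
  simp only [dotProduct, mulVec, kroneckerMap_apply, one_apply, Fintype.sum_prod_type,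
    Pi.star_apply, mul_ite, mul_one, mul_zero, ite_mul, zero_mul]
  refine Finset.sum_congr rfl fun i _ => Finset.sum_congr rfl fun j _ => ?_
  congr 1
  simp

lemma aux_kron_prod_mulVec {l r : ℕ} (C : Matrix (Fin l) (Fin l) ℂ)
    (D : Matrix (Fin r) (Fin r) ℂ) (f : Fin l → ℂ) (g : Fin r → ℂ) :
    (C ⊗ₖ D) *ᵥ (fun p : Fin l × Fin r => f p.1 * g p.2)
      = fun p => (C *ᵥ f) p.1 * (D *ᵥ g) p.2 := by
  ext p
  simp only [mulVec, dotProduct, kroneckerMap_apply, Fintype.sum_prod_type]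
  rw [Finset.sum_mul_sum]
  refine Finset.sum_congr rfl fun k _ => Finset.sum_congr rfl fun m _ => ?_
  ring

lemma aux_prod_dot {l r : ℕ} (f f' : Fin l → ℂ) (g g' : Fin r → ℂ) :
    star (fun p : Fin l × Fin r => f p.1 * g p.2) ⬝ᵥ (fun p => f' p.1 * g' p.2)
      = (star f ⬝ᵥ f') * (star g ⬝ᵥ g') := by
  simp only [dotProduct, Pi.star_apply, Fintype.sum_prod_type, StarMul.star_mul]
  rw [Finset.sum_mul_sum]
  refine Finset.sum_congr rfl fun k _ => Finset.sum_congr rfl fun m _ => ?_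
  ring

/-- Frustration bound: for a bipartite-cut Hamiltonian `H = H_L ⊗ 1 + H_M + 1 ⊗ H_R`
with `H_L, H_R ⪰ 0` and `0 ≤ H_M ≤ 1`, the left energies of any two states within
`ΔE` of the ground energy `E₀` differ by at most `1 + ΔE`. -/
theorem left_energy_difference_bound (l r : ℕ)
    (A : Matrix (Fin l) (Fin l) ℂ) (B : Matrix (Fin r) (Fin r) ℂ)
    (M H : Matrix (Fin l × Fin r) (Fin l × Fin r) ℂ)
    (E₀ ΔE : ℝ) (v₁ v₂ : Fin l × Fin r → ℂ)
    (hA : A.PosSemidef) (hB : B.PosSemidef)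
    (hM : M.IsHermitian)
    (hM0 : ∀ x : Fin l × Fin r → ℂ, 0 ≤ (star x ⬝ᵥ (M *ᵥ x)).re)
    (hM1 : ∀ x : Fin l × Fin r → ℂ, (star x ⬝ᵥ (M *ᵥ x)).re ≤ (star x ⬝ᵥ x).re)
    (hH : H = A ⊗ₖ (1 : Matrix (Fin r) (Fin r) ℂ) + M
            + (1 : Matrix (Fin l) (Fin l) ℂ) ⊗ₖ B)
    (hE₀ : (H - (E₀ : ℂ) • 1).PosSemidef)
    (hE₀eig : ∃ x : Fin l × Fin r → ℂ, x ≠ 0 ∧ H *ᵥ x = (E₀ : ℂ) • x)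
    (hΔE : 0 ≤ ΔE)
    (hv₁unit : star v₁ ⬝ᵥ v₁ = 1) (hv₂unit : star v₂ ⬝ᵥ v₂ = 1)
    (hv₁ : (star v₁ ⬝ᵥ (H *ᵥ v₁)).re ≤ E₀ + ΔE)
    (hv₂ : (star v₂ ⬝ᵥ (H *ᵥ v₂)).re ≤ E₀ + ΔE) :
    |(star v₁ ⬝ᵥ ((A ⊗ₖ (1 : Matrix (Fin r) (Fin r) ℂ)) *ᵥ v₁)).re
      - (star v₂ ⬝ᵥ ((A ⊗ₖ (1 : Matrix (Fin r) (Fin r) ℂ)) *ᵥ v₂)).re| ≤ 1 + ΔE := by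
  classical
  -- nontrivial dimensions
  have hl : 0 < l := by
    rcases Nat.eq_zero_or_pos l with h | h
    · subst h
      simp [dotProduct] at hv₁unit
    · exact h
  have hr : 0 < r := by
    rcases Nat.eq_zero_or_pos r with h | h
    · subst h
      simp [dotProduct] at hv₁unit
    · exact h
  haveI : Nonempty (Fin l) := Fin.pos_iff_nonempty.mp hl
  haveI : Nonempty (Fin r) := Fin.pos_iff_nonempty.mp hr
  -- minimal eigenvalues
  obtain ⟨i₀, -, hi₀⟩ := Finset.exists_min_image Finset.univ hA.1.eigenvalues
    Finset.univ_nonempty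
  obtain ⟨j₀, -, hj₀⟩ := Finset.exists_min_image Finset.univ hB.1.eigenvalues
    Finset.univ_nonempty
  set α : ℝ := hA.1.eigenvalues i₀ with hαdef
  set β : ℝ := hB.1.eigenvalues j₀ with hβdef
  have hα : ∀ i, α ≤ hA.1.eigenvalues i := fun i => hi₀ i (Finset.mem_univ i)
  have hβ : ∀ j, β ≤ hB.1.eigenvalues j := fun j => hj₀ j (Finset.mem_univ j)
  -- lower bounds for quadratic forms on the full space
  have hAv : ∀ v : Fin l × Fin r → ℂ,
      α * (star v ⬝ᵥ v).re
        ≤ (star v ⬝ᵥ ((A ⊗ₖ (1 : Matrix (Fin r) (Fin r) ℂ)) *ᵥ v)).re := by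
    intro v
    have h1 := aux_kron_one_dot (1 : Matrix (Fin l) (Fin l) ℂ) (r := r) v
    rw [one_kronecker_one, one_mulVec] at h1
    simp only [one_mulVec] at h1
    rw [aux_kron_one_dot, h1, Complex.re_sum, Complex.re_sum, Finset.mul_sum]
    exact Finset.sum_le_sum fun j _ => aux_rayleigh hA.1 α hα _
  have hBv : ∀ v : Fin l × Fin r → ℂ,
      β * (star v ⬝ᵥ v).re
        ≤ (star v ⬝ᵥ (((1 : Matrix (Fin l) (Fin l) ℂ) ⊗ₖ B) *ᵥ v)).re := by
    intro v
    have h1 := aux_one_kron_dot (1 : Matrix (Fin r) (Fin r) ℂ) (l := l) v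
    rw [one_kronecker_one, one_mulVec] at h1
    simp only [one_mulVec] at h1
    rw [aux_one_kron_dot, h1, Complex.re_sum, Complex.re_sum, Finset.mul_sum]
    exact Finset.sum_le_sum fun i _ => aux_rayleigh hB.1 β hβ _
  -- quadratic form of H splits
  have hquadH : ∀ v : Fin l × Fin r → ℂ, (star v ⬝ᵥ (H *ᵥ v)).re
      = (star v ⬝ᵥ ((A ⊗ₖ (1 : Matrix (Fin r) (Fin r) ℂ)) *ᵥ v)).re
        + (star v ⬝ᵥ (M *ᵥ v)).re
        + (star v ⬝ᵥ (((1 : Matrix (Fin l) (Fin l) ℂ) ⊗ₖ B) *ᵥ v)).re := by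
    intro v
    rw [hH, add_mulVec, add_mulVec, dotProduct_add, dotProduct_add, Complex.add_re,
      Complex.add_re]
  -- the product of the two minimal eigenvectors
  set u : Fin l → ℂ := ⇑(hA.1.eigenvectorBasis i₀) with hudef
  set w : Fin r → ℂ := ⇑(hB.1.eigenvectorBasis j₀) with hwdef
  have huu : star u ⬝ᵥ u = 1 := aux_unit hA.1 i₀
  have hww : star w ⬝ᵥ w = 1 := aux_unit hB.1 j₀
  set x : Fin l × Fin r → ℂ := fun p => u p.1 * w p.2 with hxdef
  have hxunit : star x ⬝ᵥ x = 1 := by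
    rw [hxdef, aux_prod_dot, huu, hww, mul_one]
  have hxA : (star x ⬝ᵥ ((A ⊗ₖ (1 : Matrix (Fin r) (Fin r) ℂ)) *ᵥ x)).re = α := by
    rw [hxdef, aux_kron_prod_mulVec, aux_prod_dot, one_mulVec, hww,
      hA.1.mulVec_eigenvectorBasis, ← hudef, ← hαdef, dotProduct_smul, huu, mul_one]
    simp [Complex.real_smul]
  have hxB : (star x ⬝ᵥ (((1 : Matrix (Fin l) (Fin l) ℂ) ⊗ₖ B) *ᵥ x)).re = β := by
    rw [hxdef, aux_kron_prod_mulVec, aux_prod_dot, one_mulVec, huu,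
      hB.1.mulVec_eigenvectorBasis, ← hwdef, ← hβdef, dotProduct_smul, hww, one_mul]
    simp [Complex.real_smul]
  have hxM : (star x ⬝ᵥ (M *ᵥ x)).re ≤ 1 := by
    have := hM1 x
    rwa [hxunit, Complex.one_re] at this
  -- ground state energy lower bound: E₀ ≤ α + 1 + β
  have hE₀x : E₀ ≤ (star x ⬝ᵥ (H *ᵥ x)).re := by
    have h0 := (Complex.le_def.mp (hE₀.dotProduct_mulVec_nonneg x)).1
    rw [Complex.zero_re, aux_sub_smul_re, hxunit, Complex.one_re, mul_one] at h0
    linarith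
  have hkey : E₀ ≤ α + 1 + β := by
    have := hquadH x
    rw [hxA, hxB] at this
    linarith [hE₀x, hxM, this.ge, this.le]
  -- bounds for v₁ and v₂
  have hre1 : (star v₁ ⬝ᵥ v₁).re = 1 := by rw [hv₁unit, Complex.one_re]
  have hre2 : (star v₂ ⬝ᵥ v₂).re = 1 := by rw [hv₂unit, Complex.one_re]
  have ha1 := hAv v₁; rw [hre1, mul_one] at ha1
  have ha2 := hAv v₂; rw [hre2, mul_one] at ha2
  have hb1 := hBv v₁; rw [hre1, mul_one] at hb1
  have hb2 := hBv v₂; rw [hre2, mul_one] at hb2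
  have hm1 := hM0 v₁
  have hm2 := hM0 v₂
  have hs1 := hquadH v₁
  have hs2 := hquadH v₂
  rw [abs_sub_le_iff]
  constructor <;> linarith
end

section
/- Let G be a rank-g orthogonal projector on a finite-dimensional complex Hilbert space, and let |v₁⟩,…,|v_g⟩ be orthonormal vectors with ⟨v_i|G|v_i⟩ ≥ 1 - δ/g for each i, where 0 ≤ δ < 1. Then every unit vector |v⟩ in span{|v₁⟩,…,|v_g⟩} satisfies ⟨v|G|v⟩ ≥ 1 - δ. -/
open scoped InnerProductSpace

/-- If `G` is a rank-`g` orthogonal projector and `v₁, …, v_g` are orthonormal with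
`⟨v_i|G|v_i⟩ ≥ 1 - δ/g`, then every unit vector in their span has `⟨v|G|v⟩ ≥ 1 - δ`. -/
theorem span_overlap {E : Type*} [NormedAddCommGroup E]
    [InnerProductSpace ℂ E] [FiniteDimensional ℂ E]
    (G : E →L[ℂ] E) (g : ℕ) (δ : ℝ) (v : Fin g → E)
    (hGsa : IsSelfAdjoint G) (hGidem : G ∘L G = G)
    (hrank : Module.finrank ℂ (LinearMap.range (G : E →ₗ[ℂ] E)) = g)
    (hv : Orthonormal ℂ v)
    (hδ0 : 0 ≤ δ) (hδ1 : δ < 1)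
    (hover : ∀ i, 1 - δ / g ≤ (⟪v i, G (v i)⟫_ℂ).re)
    (w : E) (hw : ‖w‖ = 1) (hwspan : w ∈ Submodule.span ℂ (Set.range v)) :
    1 - δ ≤ (⟪w, G w⟫_ℂ).re := by
  classical
  rcases Nat.eq_zero_or_pos g with hg0 | hg
  · subst hg0
    have : Set.range v = ∅ := Set.range_eq_empty v
    rw [this] at hwspan
    simp at hwspan
    rw [hwspan] at hw
    simp at hw
  set Q : E →L[ℂ] E := ContinuousLinearMap.id ℂ E - G with hQdef
  have hQidem : ∀ x, Q (Q x) = Q x := by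
    intro x
    have := congrArg (fun T : E →L[ℂ] E => T x) hGidem
    simp only [ContinuousLinearMap.comp_apply] at this
    simp [hQdef, map_sub, this]
  have hQsym : ∀ x y : E, ⟪Q x, y⟫_ℂ = ⟪x, Q y⟫_ℂ := by
    intro x y
    simp only [hQdef, ContinuousLinearMap.sub_apply, ContinuousLinearMap.id_apply,
      inner_sub_left, inner_sub_right]
    congr 1
    exact hGsa.isSymmetric x y
  have hQnorm : ∀ x : E, ‖Q x‖ ^ 2 = ‖x‖ ^ 2 - (⟪x, G x⟫_ℂ).re := by
    intro x
    have h1 : ‖Q x‖ ^ 2 = (⟪Q x, Q x⟫_ℂ).re := by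
      rw [InnerProductSpace.norm_sq_eq_re_inner (𝕜 := ℂ)]; rfl
    rw [h1, hQsym, hQidem]
    simp only [hQdef, ContinuousLinearMap.sub_apply, ContinuousLinearMap.id_apply,
      inner_sub_right]
    rw [InnerProductSpace.norm_sq_eq_re_inner (𝕜 := ℂ) x]
    simp
  -- bound on ‖Q (v i)‖
  have hgR : (0:ℝ) < g := by exact_mod_cast hg
  have hQvi : ∀ i, ‖Q (v i)‖ ^ 2 ≤ δ / g := by
    intro i
    rw [hQnorm, hv.1 i]
    have := hover i
    nlinarith
  -- expand w
  obtain ⟨c, hc⟩ := (Submodule.mem_span_range_iff_exists_fun ℂ).mp hwspan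
  have hcsum : ∑ i, ‖c i‖ ^ 2 = 1 := by
    have h := hv.inner_sum c c Finset.univ
    rw [hc] at h
    have h2 : (⟪w, w⟫_ℂ).re = ∑ i, ‖c i‖ ^ 2 := by
      rw [h]
      simp only [map_sum, RCLike.conj_mul]
      norm_cast
    have h3 : (⟪w, w⟫_ℂ).re = 1 := by
      have := InnerProductSpace.norm_sq_eq_re_inner (𝕜 := ℂ) w
      rw [hw] at this
      simp at this
      simpa [hw] using this.symm
    rw [← h2, h3]
  have hQw : ‖Q w‖ ≤ (∑ i, ‖c i‖) * Real.sqrt (δ / g) := by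
    rw [← hc]
    have : Q (∑ i, c i • v i) = ∑ i, c i • Q (v i) := by
      simp [map_sum]
    rw [this, Finset.sum_mul]
    refine (norm_sum_le _ _).trans (Finset.sum_le_sum fun i _ => ?_)
    rw [norm_smul]
    refine mul_le_mul_of_nonneg_left ?_ (norm_nonneg _)
    have h := hQvi i
    have := Real.sqrt_le_sqrt h
    rwa [Real.sqrt_sq (norm_nonneg _)] at this
  have hsum1 : (∑ i, ‖c i‖) ^ 2 ≤ g := by
    have h := sq_sum_le_card_mul_sum_sq (s := (Finset.univ : Finset (Fin g))) (f := fun i => ‖c i‖)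
    calc (∑ i, ‖c i‖) ^ 2 ≤ ((Finset.univ : Finset (Fin g)).card : ℝ) * ∑ i, ‖c i‖ ^ 2 := h
      _ = g := by rw [hcsum]; simp
  have hQw2 : ‖Q w‖ ^ 2 ≤ δ := by
    have h0 : 0 ≤ ∑ i, ‖c i‖ := Finset.sum_nonneg fun i _ => norm_nonneg _
    have h1 : ‖Q w‖ ^ 2 ≤ ((∑ i, ‖c i‖) * Real.sqrt (δ / g)) ^ 2 :=
      pow_le_pow_left₀ (norm_nonneg _) hQw 2
    have h2 : Real.sqrt (δ / g) ^ 2 = δ / g := Real.sq_sqrt (by positivity)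
    calc ‖Q w‖ ^ 2 ≤ ((∑ i, ‖c i‖) * Real.sqrt (δ / g)) ^ 2 := h1
      _ = (∑ i, ‖c i‖) ^ 2 * (δ / g) := by rw [mul_pow, h2]
      _ ≤ g * (δ / g) := by
          exact mul_le_mul_of_nonneg_right hsum1 (by positivity)
      _ = δ := by field_simp
  have := hQnorm w
  rw [hw] at this
  nlinarith [this, hQw2]
end

section
/- Let G be a rank-g orthogonal projector and |v₁⟩,…,|v_g⟩ orthonormal vectors with ⟨v_i|G|v_i⟩ ≥ 1 - δ/g for each i, with 0 ≤ δ < 1. Then the vectors G|v₁⟩,…,G|v_g⟩ are linearly independent, hence form a basis of the range of G. -/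
open scoped InnerProductSpace

/-- Basis under projection: if `G` is a rank-`g` orthogonal projector and `v₁, …, v_g`
are orthonormal with `⟨v_i|G|v_i⟩ ≥ 1 - δ/g` (`δ < 1`), then `G v₁, …, G v_g` are
linearly independent and span the range of `G`, i.e. they form a basis of `im G`. -/
theorem basis_under_projection {E : Type*} [NormedAddCommGroup E]
    [InnerProductSpace ℂ E] [FiniteDimensional ℂ E]
    (G : E →L[ℂ] E) (g : ℕ) (δ : ℝ) (v : Fin g → E)
    (hGsa : IsSelfAdjoint G) (hGidem : G ∘L G = G)
    (hrank : Module.finrank ℂ (LinearMap.range (G : E →ₗ[ℂ] E)) = g)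
    (hv : Orthonormal ℂ v)
    (hδ0 : 0 ≤ δ) (hδ1 : δ < 1)
    (hover : ∀ i, 1 - δ / g ≤ (⟪v i, G (v i)⟫_ℂ).re) :
    LinearIndependent ℂ (fun i => G (v i)) ∧
      Submodule.span ℂ (Set.range fun i => G (v i)) =
        LinearMap.range (G : E →ₗ[ℂ] E) := by
  -- the complementary projector
  set Q : E →L[ℂ] E := 1 - G with hQ
  have hQsa : IsSelfAdjoint Q := (IsSelfAdjoint.one _).sub hGsa
  have hQidem : Q ∘L Q = Q := by
    have hmul : G * G = G := hGidem
    show Q * Q = Q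
    simp only [hQ, sub_mul, mul_sub, one_mul, mul_one, hmul]
    abel
  have hQsym := hQsa.isSymmetric
  -- ‖Q x‖² = re ⟪x, Q x⟫
  have hQnorm : ∀ x : E, ‖Q x‖ ^ 2 = (⟪x, Q x⟫_ℂ).re := by
    intro x
    have hQQ : Q (Q x) = Q x := by
      have := congrArg (fun f : E →L[ℂ] E => f x) hQidem
      simpa using this
    have h1 : ⟪Q x, Q x⟫_ℂ = ⟪x, Q x⟫_ℂ := by
      calc ⟪Q x, Q x⟫_ℂ = ⟪x, Q (Q x)⟫_ℂ := hQsym x (Q x)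
        _ = ⟪x, Q x⟫_ℂ := by rw [hQQ]
    have h2 : (⟪Q x, Q x⟫_ℂ).re = ‖Q x‖ ^ 2 := by
      rw [inner_self_eq_norm_sq_to_K (𝕜 := ℂ)]
      norm_cast
    rw [← h2, h1]
  -- bound on ‖Q vᵢ‖²
  have hQv : ∀ i, ‖Q (v i)‖ ^ 2 ≤ δ / g := by
    intro i
    rw [hQnorm]
    have hvi : ⟪v i, v i⟫_ℂ = 1 := by
      rw [inner_self_eq_norm_sq_to_K (𝕜 := ℂ), hv.1 i]
      simp
    have : ⟪v i, Q (v i)⟫_ℂ = 1 - ⟪v i, G (v i)⟫_ℂ := by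
      simp [hQ, inner_sub_right, hvi, hv.1 i]
    rw [this]
    have := hover i
    simp only [Complex.sub_re, Complex.one_re]
    linarith
  -- key: if G w = 0 for w = ∑ cᵢ vᵢ then w = 0
  have key : ∀ c : Fin g → ℂ, ∑ i, c i • G (v i) = 0 → ∀ i, c i = 0 := by
    intro c hc
    set w : E := ∑ i, c i • v i with hw
    have hGw : G w = 0 := by
      rw [hw, map_sum]
      simpa [map_smul] using hc
    have hQw : Q w = w := by simp [hQ, hGw]
    have hnw : ‖w‖ ^ 2 = ∑ i, ‖c i‖ ^ 2 := by
      have h0 : ⟪w, w⟫_ℂ = ∑ i, (starRingEnd ℂ) (c i) * c i := by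
        rw [hw, sum_inner]
        congr 1
        ext i
        rw [inner_smul_left, hv.inner_right_fintype]
      have h1 : ⟪w, w⟫_ℂ = ((∑ i, ‖c i‖ ^ 2 : ℝ) : ℂ) := by
        rw [h0]
        push_cast
        exact Finset.sum_congr rfl fun i _ => RCLike.conj_mul (c i)
      rw [← inner_self_eq_norm_sq (𝕜 := ℂ) w, h1]
      exact RCLike.ofReal_re _
    -- Q w = ∑ cᵢ • Q vᵢ
    have hQw2 : Q w = ∑ i, c i • Q (v i) := by
      rw [hw, map_sum]; simp [map_smul]
    have h1 : ‖w‖ ≤ ∑ i, ‖c i‖ * ‖Q (v i)‖ := by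
      calc ‖w‖ = ‖Q w‖ := by rw [hQw]
        _ = ‖∑ i, c i • Q (v i)‖ := by rw [hQw2]
        _ ≤ ∑ i, ‖c i • Q (v i)‖ := norm_sum_le _ _
        _ = ∑ i, ‖c i‖ * ‖Q (v i)‖ := by simp [norm_smul]
    have h2 : (∑ i, ‖c i‖ * ‖Q (v i)‖) ^ 2 ≤
        (∑ i, ‖c i‖ ^ 2) * ∑ i, ‖Q (v i)‖ ^ 2 :=
      Finset.sum_mul_sq_le_sq_mul_sq _ _ _
    have h3 : ∑ i, ‖Q (v i)‖ ^ 2 ≤ δ := by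
      calc ∑ i, ‖Q (v i)‖ ^ 2 ≤ ∑ _i : Fin g, δ / g :=
            Finset.sum_le_sum fun i _ => hQv i
        _ = g * (δ / g) := by simp [Finset.sum_const, mul_comm]
        _ ≤ δ := by
            rcases Nat.eq_zero_or_pos g with h | h
            · simp [h, hδ0]
            · rw [mul_div_cancel₀]
              exact Nat.cast_ne_zero.mpr h.ne'
    have hw0 : ‖w‖ ^ 2 ≤ ‖w‖ ^ 2 * δ := by
      calc ‖w‖ ^ 2 ≤ (∑ i, ‖c i‖ * ‖Q (v i)‖) ^ 2 := by
            apply pow_le_pow_left₀ (norm_nonneg _) h1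
        _ ≤ (∑ i, ‖c i‖ ^ 2) * ∑ i, ‖Q (v i)‖ ^ 2 := h2
        _ ≤ (∑ i, ‖c i‖ ^ 2) * δ := by
            apply mul_le_mul_of_nonneg_left h3
            exact Finset.sum_nonneg fun i _ => sq_nonneg _
        _ = ‖w‖ ^ 2 * δ := by rw [hnw]
    have hwz : ‖w‖ ^ 2 = 0 := by nlinarith [sq_nonneg ‖w‖]
    have hweq : w = 0 := by
      have : ‖w‖ = 0 := by nlinarith [norm_nonneg w]
      exact norm_eq_zero.mp this
    intro i
    have := hv.linearIndependent
    have hcz : ∑ i, c i • v i = 0 := hw ▸ hweq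
    exact Fintype.linearIndependent_iff.mp this c hcz i
  have hli : LinearIndependent ℂ (fun i => G (v i)) :=
    Fintype.linearIndependent_iff.mpr key
  refine ⟨hli, ?_⟩
  have hle : Submodule.span ℂ (Set.range fun i => G (v i)) ≤
      LinearMap.range (G : E →ₗ[ℂ] E) := by
    rw [Submodule.span_le]
    rintro x ⟨i, rfl⟩
    exact ⟨v i, rfl⟩
  apply Submodule.eq_of_le_of_finrank_eq hle
  rw [hrank, finrank_span_eq_card hli, Fintype.card_fin]
end

section
/- Let G be a rank-g orthogonal projector and |v₁⟩,…,|v_g⟩ orthonormal vectors with ⟨v_i|G|v_i⟩ ≥ 1 - δ/g for each i, with 0 ≤ δ < 1, and let S = span{|v₁⟩,…,|v_g⟩}. Then any unit vector |v'⟩ orthogonal to S satisfies ⟨v'|G|v'⟩ ≤ δ. -/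
open scoped InnerProductSpace

/-- Fullness: if `G` is a rank-`g` orthogonal projector and `v₁, …, v_g` orthonormal
with `⟨v_i|G|v_i⟩ ≥ 1 - δ/g` (`δ < 1`), then any unit vector orthogonal to all `v_i`
satisfies `⟨v'|G|v'⟩ ≤ δ`. -/
theorem fullness_lemma {E : Type*} [NormedAddCommGroup E]
    [InnerProductSpace ℂ E] [FiniteDimensional ℂ E]
    (G : E →L[ℂ] E) (g : ℕ) (δ : ℝ) (v : Fin g → E)
    (hGsa : IsSelfAdjoint G) (hGidem : G ∘L G = G)
    (hrank : Module.finrank ℂ (LinearMap.range (G : E →ₗ[ℂ] E)) = g)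
    (hv : Orthonormal ℂ v)
    (hδ0 : 0 ≤ δ) (hδ1 : δ < 1)
    (hover : ∀ i, 1 - δ / g ≤ (⟪v i, G (v i)⟫_ℂ).re)
    (w : E) (hw : ‖w‖ = 1) (hwperp : ∀ i, ⟪v i, w⟫_ℂ = 0) :
    (⟪w, G w⟫_ℂ).re ≤ δ := by
  classical
  -- basic facts
  have hGG : ∀ x, G (G x) = G x := fun x => congrArg (fun f => f x) hGidem
  have key : ∀ x : E, ⟪x, G x⟫_ℂ = (‖G x‖ : ℂ)^2 := by
    intro x
    have h2 : ⟪x, G (G x)⟫_ℂ = ⟪G x, G x⟫_ℂ := by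
      rw [← ContinuousLinearMap.adjoint_inner_left, hGsa.adjoint_eq]
    rw [hGG x] at h2
    rw [h2, inner_self_eq_norm_sq_to_K]
    norm_cast
  have keyre : ∀ x : E, (⟪x, G x⟫_ℂ).re = ‖G x‖^2 := by
    intro x; rw [key x]; norm_cast
  have hnonneg : ∀ x : E, 0 ≤ (⟪x, G x⟫_ℂ).re := fun x => (keyre x) ▸ sq_nonneg _
  have hle1 : ∀ x : E, ‖x‖ = 1 → (⟪x, G x⟫_ℂ).re ≤ 1 := by
    intro x hx
    rw [keyre]
    have hcs : ‖G x‖^2 ≤ ‖x‖ * ‖G x‖ := by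
      rw [← keyre]
      calc (⟪x, G x⟫_ℂ).re ≤ ‖⟪x, G x⟫_ℂ‖ := Complex.re_le_norm _
        _ ≤ ‖x‖ * ‖G x‖ := norm_inner_le_norm _ _
    rw [hx, one_mul] at hcs
    nlinarith [norm_nonneg (G x)]
  -- handle g = 0
  rcases Nat.eq_zero_or_pos g with hg0 | hgpos
  · have hbot : LinearMap.range (G : E →ₗ[ℂ] E) = ⊥ := by
      rw [hg0] at hrank
      exact Submodule.finrank_eq_zero.mp hrank
    have hGw : G w = 0 := by
      have h := LinearMap.mem_range_self (G : E →ₗ[ℂ] E) w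
      rw [hbot] at h
      simpa using h
    rw [hGw]
    simpa using hδ0
  set s : Set E := Set.range v ∪ {w} with hs
  have hvinj : Function.Injective v := hv.linearIndependent.injective
  have hwnot : w ∉ Set.range v := by
    rintro ⟨i, rfl⟩
    have := hwperp i
    rw [inner_self_eq_norm_sq_to_K, hw] at this
    simp at this
  have hsorth : Orthonormal ℂ ((↑) : s → E) := by
    rw [orthonormal_subtype_iff_ite]
    rintro a ha b hb
    rcases ha with ⟨i, rfl⟩ | ha
    · rcases hb with ⟨j, rfl⟩ | hb
      · by_cases hij : i = j
        · subst hij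
          rw [if_pos rfl, inner_self_eq_norm_sq_to_K, hv.1 i]
          norm_num
        · rw [if_neg (fun h => hij (hvinj h))]
          exact hv.2 hij
      · rcases hb with rfl
        rw [if_neg (fun h => hwnot ⟨i, h⟩)]
        exact hwperp i
    · rcases ha with rfl
      rcases hb with ⟨j, rfl⟩ | hb
      · rw [if_neg (fun h => hwnot ⟨j, h.symm⟩)]
        rw [← inner_conj_symm, hwperp j]
        simp
      · rcases hb with rfl
        rw [if_pos rfl, inner_self_eq_norm_sq_to_K, hw]
        norm_num
  obtain ⟨u, b, hsu, hb⟩ := hsorth.exists_orthonormalBasis_extension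
  -- trace of G
  have hproj : LinearMap.IsProj (LinearMap.range (G : E →ₗ[ℂ] E)) (G : E →ₗ[ℂ] E) :=
    { map_mem := fun x => LinearMap.mem_range_self _ x
      map_id := by rintro x ⟨y, rfl⟩; exact hGG y }
  have htr : LinearMap.trace ℂ E (G : E →ₗ[ℂ] E) = (g : ℂ) := by
    rw [hproj.trace, hrank]
  have htrsum : LinearMap.trace ℂ E (G : E →ₗ[ℂ] E) = ∑ e : u, ⟪b e, G (b e)⟫_ℂ := by
    rw [LinearMap.trace_eq_matrix_trace ℂ b.toBasis, Matrix.trace]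
    simp only [Matrix.diag, LinearMap.toMatrix_apply, b.coe_toBasis, b.coe_toBasis_repr_apply,
      b.repr_apply_apply]
    rfl
  -- real parts
  have hsum : (g : ℝ) = ∑ e : u, (⟪(e : E), G e⟫_ℂ).re := by
    have := htrsum ▸ htr
    have := congrArg Complex.re this.symm
    rw [Complex.re_sum] at this
    simpa [hb] using this
  -- finishing
  set f : E → ℝ := fun x => (⟪x, G x⟫_ℂ).re with hf
  have hsum' : (g : ℝ) = ∑ e ∈ u, f e := by
    rw [hsum]; exact (Finset.sum_coe_sort u f)
  have hvmem : ∀ i, v i ∈ u := fun i => hsu (Or.inl ⟨i, rfl⟩)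
  have hwmem : w ∈ u := hsu (Or.inr rfl)
  set t : Finset E := insert w (Finset.image v Finset.univ) with ht
  have htu : t ⊆ u := by
    intro x hx
    rcases Finset.mem_insert.mp hx with rfl | hx
    · exact hwmem
    · obtain ⟨i, _, rfl⟩ := Finset.mem_image.mp hx
      exact hvmem i
  have h1 : ∑ e ∈ t, f e ≤ ∑ e ∈ u, f e :=
    Finset.sum_le_sum_of_subset_of_nonneg htu (fun x _ _ => hnonneg x)
  have hwt : w ∉ Finset.image v Finset.univ := by
    intro hx
    obtain ⟨i, _, hi⟩ := Finset.mem_image.mp hx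
    exact hwnot ⟨i, hi⟩
  have h2 : ∑ e ∈ t, f e = f w + ∑ i, f (v i) := by
    rw [ht, Finset.sum_insert hwt, Finset.sum_image (fun a _ b _ h => hvinj h)]
  have h3 : (g : ℝ) - δ ≤ ∑ i, f (v i) := by
    have := Finset.sum_le_sum (fun i (_ : i ∈ Finset.univ) => hover i)
    have hcard : ∑ _i : Fin g, (1 - δ / g) = (g : ℝ) * (1 - δ / g) := by
      simp [Finset.sum_const, mul_comm]
      ring
    have hgne : (g : ℝ) ≠ 0 := Nat.cast_ne_zero.mpr hgpos.ne'
    calc (g : ℝ) - δ = (g : ℝ) * (1 - δ / g) := by field_simp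
      _ = ∑ _i : Fin g, (1 - δ / g) := hcard.symm
      _ ≤ ∑ i, f (v i) := this
  have := hsum' ▸ h1
  rw [h2] at this
  have hfw : f w ≤ δ := by linarith
  exact hfw
end

section
/- Let G and Υ be rank-g orthogonal projectors on a finite-dimensional complex Hilbert space, where Υ = Σ_{j=1}^g |γ_j⟩⟨γ_j| for orthonormal |γ_j⟩ satisfying ⟨γ_j|G|γ_j⟩ ≥ 1 - η²/(2g) for each j. Then ‖G - Υ‖_F ≤ η (Frobenius/Hilbert–Schmidt norm). -/
open scoped InnerProductSpace

private lemma trace_eq_sum_inner' {E : Type*} [NormedAddCommGroup E]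
    [InnerProductSpace ℂ E] [FiniteDimensional ℂ E] {ι : Type*} [Fintype ι]
    (b : OrthonormalBasis ι ℂ E) (T : E →ₗ[ℂ] E) :
    LinearMap.trace ℂ E T = ∑ i, ⟪b i, T (b i)⟫_ℂ := by
  classical
  rw [LinearMap.trace_eq_matrix_trace ℂ b.toBasis T, Matrix.trace]
  congr 1
  ext i
  rw [Matrix.diag_apply, LinearMap.toMatrix_apply, b.coe_toBasis,
    b.coe_toBasis_repr_apply, b.repr_apply_apply]

private lemma trace_rank_one_sum {E : Type*} [NormedAddCommGroup E]
    [InnerProductSpace ℂ E] [FiniteDimensional ℂ E] {n : ℕ}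
    (T : E →ₗ[ℂ] E) (u v : Fin n → E)
    (h : ∀ x : E, T x = ∑ j, ⟪u j, x⟫_ℂ • v j) :
    LinearMap.trace ℂ E T = ∑ j, ⟪u j, v j⟫_ℂ := by
  classical
  let b := stdOrthonormalBasis ℂ E
  rw [trace_eq_sum_inner' b T]
  simp_rw [h, inner_sum, inner_smul_right]
  rw [Finset.sum_comm]
  congr 1
  ext j
  simpa using b.sum_inner_mul_inner (u j) (v j)


/-- Frobenius-norm closeness of the approximate ground space projector: if `G` and
`Υ = Σ_j |γ_j⟩⟨γ_j|` are rank-`g` orthogonal projectors with `⟨γ_j|G|γ_j⟩ ≥ 1 - η²/(2g)`,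
then `‖G - Υ‖_F ≤ η`. -/
theorem projector_frobenius_close {E : Type*} [NormedAddCommGroup E]
    [InnerProductSpace ℂ E] [FiniteDimensional ℂ E]
    (G Υ : E →L[ℂ] E) (g : ℕ) (η : ℝ) (γ : Fin g → E)
    (hGsa : IsSelfAdjoint G) (hGidem : G ∘L G = G)
    (hGrank : Module.finrank ℂ (LinearMap.range (G : E →ₗ[ℂ] E)) = g)
    (hγ : Orthonormal ℂ γ)
    (hΥ : ∀ x : E, Υ x = ∑ j, ⟪γ j, x⟫_ℂ • γ j)
    (hg : 1 ≤ g) (hη : 0 ≤ η)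
    (hover : ∀ j, 1 - η ^ 2 / (2 * g) ≤ (⟪γ j, G (γ j)⟫_ℂ).re) :
    Real.sqrt ((LinearMap.trace ℂ E
      ((((G - Υ).adjoint ∘L (G - Υ)) : E →L[ℂ] E) : E →ₗ[ℂ] E)).re) ≤ η := by
  classical
  -- Υ is self-adjoint
  have hΥsa : IsSelfAdjoint Υ := by
    rw [ContinuousLinearMap.isSelfAdjoint_iff_isSymmetric]
    intro x y
    show ⟪Υ x, y⟫_ℂ = ⟪x, Υ y⟫_ℂ
    rw [hΥ x, hΥ y, sum_inner, inner_sum]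
    congr 1; ext j
    rw [inner_smul_left, inner_smul_right, ← inner_conj_symm (γ j) x, Complex.conj_conj]
    ring
  have hadj : (G - Υ).adjoint = G - Υ := by
    rw [← ContinuousLinearMap.star_eq_adjoint]
    exact hGsa.sub hΥsa
  rw [hadj]
  set G' : E →ₗ[ℂ] E := (G : E →ₗ[ℂ] E)
  set Υ' : E →ₗ[ℂ] E := (Υ : E →ₗ[ℂ] E)
  have hcoe : (((G - Υ) ∘L (G - Υ) : E →L[ℂ] E) : E →ₗ[ℂ] E)
      = G' ∘ₗ G' - G' ∘ₗ Υ' - Υ' ∘ₗ G' + Υ' ∘ₗ Υ' := by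
    ext x
    simp [G', Υ', ContinuousLinearMap.comp_apply, map_sub]
    abel
  -- trace of G
  have hGG : G' ∘ₗ G' = G' := by
    ext x; simpa [G'] using congrArg (fun f => f x) hGidem
  have hprojG : LinearMap.IsProj (LinearMap.range G') G' := by
    refine ⟨fun x => LinearMap.mem_range_self _ x, ?_⟩
    rintro x ⟨y, rfl⟩
    exact congrArg (fun f => f y) hGG
  have htrG : LinearMap.trace ℂ E G' = (g : ℂ) := by
    rw [hprojG.trace, hGrank]
  -- trace of Υ
  have htrΥ : LinearMap.trace ℂ E Υ' = (g : ℂ) := by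
    rw [trace_rank_one_sum Υ' γ γ (by intro x; exact hΥ x)]
    simp [orthonormal_iff_ite.mp hγ]
    simp [hγ.1]
  -- trace of G ∘ Υ
  have htrGΥ : LinearMap.trace ℂ E (G' ∘ₗ Υ') = ∑ j, ⟪γ j, G (γ j)⟫_ℂ := by
    refine trace_rank_one_sum _ γ (fun j => G (γ j)) ?_
    intro x
    simp [G', Υ', hΥ x, map_sum, map_smul]
  -- trace of Υ ∘ G
  have hGsym := ContinuousLinearMap.isSelfAdjoint_iff_isSymmetric.mp hGsa
  have htrΥG : LinearMap.trace ℂ E (Υ' ∘ₗ G') = ∑ j, ⟪G (γ j), γ j⟫_ℂ := by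
    refine trace_rank_one_sum _ (fun j => G (γ j)) γ ?_
    intro x
    simp only [LinearMap.comp_apply, G', Υ', ContinuousLinearMap.coe_coe, hΥ (G x)]
    congr 1; ext j
    congr 1
    exact (hGsym (γ j) x).symm
  -- trace of Υ ∘ Υ
  have htrΥΥ : LinearMap.trace ℂ E (Υ' ∘ₗ Υ') = (g : ℂ) := by
    rw [trace_rank_one_sum _ γ (fun j => Υ (γ j)) (by
      intro x
      simp [Υ', hΥ x, map_sum, map_smul])]
    have : ∀ j, ⟪γ j, Υ (γ j)⟫_ℂ = 1 := by
      intro j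
      rw [hΥ (γ j), inner_sum]
      simp [inner_smul_right, apply_ite (fun y : E => ⟪γ j, y⟫_ℂ),
        orthonormal_iff_ite.mp hγ]
    simp [this]
  have key : (LinearMap.trace ℂ E
      (((G - Υ) ∘L (G - Υ) : E →L[ℂ] E) : E →ₗ[ℂ] E)).re
      = 2 * g - 2 * ∑ j, (⟪γ j, G (γ j)⟫_ℂ).re := by
    rw [hcoe, map_add, map_sub, map_sub, hGG, htrG, htrGΥ, htrΥG, htrΥΥ]
    have hswap : (∑ j, ⟪G (γ j), γ j⟫_ℂ) = starRingEnd ℂ (∑ j, ⟪γ j, G (γ j)⟫_ℂ) := by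
      rw [map_sum]
      exact Finset.sum_congr rfl fun j _ => (inner_conj_symm _ _).symm
    rw [hswap]
    simp [Complex.sub_re, Complex.add_re, Complex.conj_re]
    have hre : ∀ i, (⟪G (γ i), γ i⟫_ℂ).re = (⟪γ i, G (γ i)⟫_ℂ).re := fun i => by
      rw [← inner_conj_symm (γ i), Complex.conj_re]
    simp only [hre]
    ring
  rw [key]
  have hsum : (g : ℝ) - η ^ 2 / 2 ≤ ∑ j, (⟪γ j, G (γ j)⟫_ℂ).re := by
    calc (g : ℝ) - η ^ 2 / 2 = ∑ _j : Fin g, (1 - η ^ 2 / (2 * g)) := by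
          rw [Finset.sum_const]
          have hg0 : (g : ℝ) ≠ 0 := by positivity
          simp [Finset.card_univ]
          field_simp
      _ ≤ _ := Finset.sum_le_sum fun j _ => hover j
  have hle : 2 * (g : ℝ) - 2 * ∑ j, (⟪γ j, G (γ j)⟫_ℂ).re ≤ η ^ 2 := by nlinarith
  calc Real.sqrt _ ≤ Real.sqrt (η ^ 2) := Real.sqrt_le_sqrt hle
    _ = η := Real.sqrt_sq hη
end
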